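/- With the notation above, set R = P(0) + ⋂_θ R(ω(P(θ))). Then P(θ) ∈ R for all θ, and every point P(θ) is a critical point of the restriction of h to the affine subspace R; consequently, if h is steep (critical points of h restricted to any affine subspace are isolated) then P is constant. -/

import Mathlib

open scoped RealInnerProductSpace

/-- The real span `R(ω)` of the resonance module
`Z(ω) = {k ∈ ℤ^d : ⟨k,ω⟩ = 0}` of a frequency `ω ∈ ℝ^d`. -/
noncomputable def resonanceSpan (d : ℕ) (w : EuclideanSpace ℝ (Fin d)) :
    Submodule ℝ (EuclideanSpace ℝ (Fin d)) :=
  Submodule.span ℝ {v : EuclideanSpace ℝ (Fin d) |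
    (∀ i, ∃ m : ℤ, v i = (m : ℝ)) ∧ ⟪v, w⟫ = 0}

/-- `h` is steep: for every affine subspace `Λ = p₀ + W`, the critical points of the
restriction of `h` to `Λ` (points `p` where the gradient `ω(p)` is orthogonal to `W`)
are isolated. -/
def IsSteep (d : ℕ) (U : Set (EuclideanSpace ℝ (Fin d)))
    (ω : EuclideanSpace ℝ (Fin d) → EuclideanSpace ℝ (Fin d)) : Prop :=
  ∀ (W : Submodule ℝ (EuclideanSpace ℝ (Fin d))) (p₀ p : EuclideanSpace ℝ (Fin d)),
    p ∈ U → p - p₀ ∈ W → (∀ v ∈ W, ⟪ω p, v⟫ = 0) →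
    ∃ ε > (0 : ℝ), ∀ p' : EuclideanSpace ℝ (Fin d),
      p' ∈ U → p' - p₀ ∈ W → (∀ v ∈ W, ⟪ω p', v⟫ = 0) → ‖p' - p‖ < ε → p' = p

/-- With `R = P(0) + ⋂_θ R(ω(P(θ)))`: the curve `P` lies in `R`, every point `P(θ)` is
a critical point of the restriction of `h` to the affine subspace `R`, and if `h` is
steep then `P` is constant. -/
theorem curve_in_intersection_critical_and_steep_implies_constant (d : ℕ)
    (U : Set (EuclideanSpace ℝ (Fin d))) (hU : IsOpen U)
    (h : EuclideanSpace ℝ (Fin d) → ℝ)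
    (ω : EuclideanSpace ℝ (Fin d) → EuclideanSpace ℝ (Fin d))
    (hω : ∀ p ∈ U, HasGradientAt h (ω p) p)
    (P : ℝ → EuclideanSpace ℝ (Fin d))
    (hPcont : Continuous P)
    (hPU : ∀ θ : ℝ, P θ ∈ U)
    (hres : ∀ θ θ' : ℝ, P θ' - P θ ∈ resonanceSpan d (ω (P θ)))
    (V : Submodule ℝ (EuclideanSpace ℝ (Fin d)))
    (hV : V = ⨅ θ : ℝ, resonanceSpan d (ω (P θ))) :
    (∀ θ : ℝ, P θ - P 0 ∈ V) ∧
    (∀ θ : ℝ, ∀ v ∈ V, ⟪ω (P θ), v⟫ = 0) ∧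
    (IsSteep d U ω → ∀ θ : ℝ, P θ = P 0) := by
  subst hV
  have hmem : ∀ θ : ℝ, P θ - P 0 ∈ ⨅ θ' : ℝ, resonanceSpan d (ω (P θ')) := by
    intro θ
    rw [Submodule.mem_iInf]
    intro θ'
    have h1 := hres θ' θ
    have h2 := hres θ' 0
    have := Submodule.sub_mem _ h1 h2
    simpa using this
  have horth : ∀ θ : ℝ, ∀ v ∈ (⨅ θ' : ℝ, resonanceSpan d (ω (P θ'))),
      ⟪ω (P θ), v⟫ = 0 := by
    intro θ v hv
    have hv' : v ∈ resonanceSpan d (ω (P θ)) := (Submodule.mem_iInf _).mp hv θ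
    have hle : resonanceSpan d (ω (P θ)) ≤ LinearMap.ker (innerSL ℝ (ω (P θ)) : EuclideanSpace ℝ (Fin d) →ₗ[ℝ] ℝ) := by
      rw [resonanceSpan, Submodule.span_le]
      rintro x ⟨-, hx⟩
      simp only [SetLike.mem_coe, LinearMap.mem_ker, ContinuousLinearMap.coe_coe,
        innerSL_apply_apply]
      rw [real_inner_comm]
      exact hx
    have := hle hv'
    simpa using this
  refine ⟨hmem, horth, ?_⟩
  intro hsteep θ
  have hclopen : IsClopen {θ : ℝ | P θ = P 0} := by
    constructor
    · exact isClosed_eq hPcont continuous_const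
    · rw [isOpen_iff_mem_nhds]
      intro θ₀ hθ₀
      obtain ⟨ε, hε, hloc⟩ :=
        hsteep _ (P 0) (P θ₀) (hPU θ₀) (hmem θ₀) (horth θ₀)
      have hnb : ∀ᶠ θ' in nhds θ₀, dist (P θ') (P θ₀) < ε :=
        Metric.tendsto_nhds.mp (hPcont.tendsto θ₀) ε hε
      filter_upwards [hnb] with θ' hθ'
      have hnorm : ‖P θ' - P θ₀‖ < ε := by rwa [← dist_eq_norm]
      have := hloc (P θ') (hPU θ') (hmem θ') (horth θ') hnorm
      show P θ' = P 0
      rw [this]; exact hθ₀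
  have huniv : {θ : ℝ | P θ = P 0} = Set.univ :=
    hclopen.eq_univ ⟨0, rfl⟩
  have : θ ∈ {θ : ℝ | P θ = P 0} := huniv ▸ Set.mem_univ θ
  exact this
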